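/- arXiv:1702.01778 — 4 statements merged into one kernel-verified Lean document; each statement's English description precedes it below -/
import Mathlib

section
/- The equation (-1/Γ(1-ν))·E[exp(-λκT_ν)] - κγ y^{ν-1}·(-1/Γ(1-ν)) = (λκ)^ν has exactly one solution κ ∈ (0,∞), for each fixed y > 0. -/
open Real Set MeasureTheory Filter

theorem kappa_equation_unique_solution (ν lam γ y : ℝ)
    (hν : 1 < ν) (hν2 : ν < 2) (hlam : 0 < lam) (hγ : 0 ≤ γ) (hy : 0 < y) :
    ∃! κ : ℝ, 0 < κ ∧
      (-1 / Real.Gamma (1 - ν)) *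
          (∫ x in Set.Ioi (1 : ℝ), Real.exp (-(lam * κ * x)) * (ν * x ^ (-ν - 1)))
        - κ * γ * y ^ (ν - 1) * (-1 / Real.Gamma (1 - ν)) = (lam * κ) ^ ν := by
  have hν0 : (0:ℝ) < ν := by linarith
  -- c > 0
  set c : ℝ := -1 / Real.Gamma (1 - ν) with hcdef
  have hΓneg : Real.Gamma (1 - ν) < 0 := by
    have h1 : (1 - ν) ≠ 0 := by intro h; linarith [h]
    have h2 : Real.Gamma ((1 - ν) + 1) = (1 - ν) * Real.Gamma (1 - ν) :=
      Real.Gamma_add_one h1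
    have h3 : 0 < Real.Gamma ((1 - ν) + 1) := Real.Gamma_pos_of_pos (by linarith)
    nlinarith
  have hcpos : 0 < c := by
    have : 1 / Real.Gamma (1 - ν) < 0 := one_div_neg.mpr hΓneg
    rw [hcdef, neg_div]
    linarith
  -- the integral as a function of κ
  set g : ℝ → ℝ := fun κ => ∫ x in Set.Ioi (1:ℝ), Real.exp (-(lam * κ * x)) * (ν * x ^ (-ν - 1))
    with hgdef
  set f : ℝ → ℝ := fun κ => c * g κ - κ * γ * y ^ (ν - 1) * c - (lam * κ) ^ ν with hfdef
  have hexp : -ν - 1 < -1 := by linarith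
  have hbound_int : IntegrableOn (fun x : ℝ => ν * x ^ (-ν - 1)) (Set.Ioi 1) :=
    (integrableOn_Ioi_rpow_of_lt hexp one_pos).const_mul ν
  have hbound_nonneg : ∀ x ∈ Set.Ioi (1:ℝ), 0 ≤ ν * x ^ (-ν - 1) := by
    intro x hx
    have : (0:ℝ) < x := lt_trans one_pos hx
    positivity
  have hmeas : ∀ κ : ℝ, AEStronglyMeasurable
      (fun x : ℝ => Real.exp (-(lam * κ * x)) * (ν * x ^ (-ν - 1)))
      (volume.restrict (Set.Ioi 1)) := by
    intro κ
    apply Measurable.aestronglyMeasurable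
    fun_prop
  have habs : ∀ κ : ℝ, 0 ≤ κ → ∀ x ∈ Set.Ioi (1:ℝ),
      ‖Real.exp (-(lam * κ * x)) * (ν * x ^ (-ν - 1))‖ ≤ ν * x ^ (-ν - 1) := by
    intro κ hκ x hx
    have hx0 : (0:ℝ) < x := lt_trans one_pos hx
    have h1 : Real.exp (-(lam * κ * x)) ≤ 1 := by
      rw [Real.exp_le_one_iff]
      nlinarith [mul_nonneg (mul_nonneg hlam.le hκ) hx0.le]
    have h2 : 0 ≤ ν * x ^ (-ν - 1) := hbound_nonneg x hx
    rw [Real.norm_eq_abs, abs_mul, abs_of_pos (Real.exp_pos _), abs_of_nonneg h2]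
    nlinarith [Real.exp_pos (-(lam * κ * x))]
  have hint : ∀ κ : ℝ, 0 ≤ κ → IntegrableOn
      (fun x : ℝ => Real.exp (-(lam * κ * x)) * (ν * x ^ (-ν - 1))) (Set.Ioi 1) := by
    intro κ hκ
    exact Integrable.mono' hbound_int (hmeas κ)
      ((ae_restrict_iff' measurableSet_Ioi).mpr (ae_of_all _ (habs κ hκ)))
  -- g is antitone on [0, ∞)
  have hg_anti : ∀ κ₁ κ₂ : ℝ, 0 ≤ κ₁ → κ₁ ≤ κ₂ → g κ₂ ≤ g κ₁ := by
    intro κ₁ κ₂ h0 h12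
    apply setIntegral_mono_on (hint κ₂ (le_trans h0 h12)) (hint κ₁ h0) measurableSet_Ioi
    intro x hx
    have hx0 : (0:ℝ) < x := lt_trans one_pos hx
    have := hbound_nonneg x hx
    have hexp_le : Real.exp (-(lam * κ₂ * x)) ≤ Real.exp (-(lam * κ₁ * x)) := by
      apply Real.exp_le_exp.mpr
      nlinarith [mul_le_mul_of_nonneg_right (mul_le_mul_of_nonneg_left h12 hlam.le) hx0.le]
    nlinarith [Real.exp_pos (-(lam * κ₂ * x))]
  -- value of the bound integral
  have hI1 : ∫ x in Set.Ioi (1:ℝ), ν * x ^ (-ν - 1) = 1 := by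
    rw [MeasureTheory.integral_const_mul, integral_Ioi_rpow_of_lt hexp one_pos]
    rw [Real.one_rpow]
    rw [show -ν - 1 + 1 = -ν by ring, neg_div, one_div_neg_eq_neg_one_div, neg_neg, mul_one_div_cancel (ne_of_gt hν0)]
  -- g κ ≤ 1 for κ ≥ 0
  have hg_le_one : ∀ κ : ℝ, 0 ≤ κ → g κ ≤ 1 := by
    intro κ hκ
    rw [← hI1]
    apply setIntegral_mono_on (hint κ hκ) hbound_int measurableSet_Ioi
    intro x hx
    have := habs κ hκ x hx
    calc Real.exp (-(lam * κ * x)) * (ν * x ^ (-ν - 1))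
        ≤ ‖Real.exp (-(lam * κ * x)) * (ν * x ^ (-ν - 1))‖ := le_abs_self _
      _ ≤ ν * x ^ (-ν - 1) := this
  -- f strictly antitone on (0,∞)
  have hf_anti : StrictAntiOn f (Set.Ioi 0) := by
    intro κ₁ h1 κ₂ h2 h12
    simp only [hfdef]
    have hA : c * g κ₂ ≤ c * g κ₁ :=
      mul_le_mul_of_nonneg_left (hg_anti κ₁ κ₂ (le_of_lt h1) (le_of_lt h12)) (le_of_lt hcpos)
    have hB : κ₁ * γ * y ^ (ν - 1) * c ≤ κ₂ * γ * y ^ (ν - 1) * c := by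
      have : (0:ℝ) ≤ γ * y ^ (ν - 1) * c :=
        mul_nonneg (mul_nonneg hγ (Real.rpow_nonneg hy.le _)) hcpos.le
      nlinarith
    have hC : (lam * κ₁) ^ ν < (lam * κ₂) ^ ν := by
      simp only [Set.mem_Ioi] at h1 h2
      apply Real.rpow_lt_rpow (mul_nonneg hlam.le h1.le) _ hν0
      nlinarith
    linarith
  -- continuity of f at positive points
  have hf_cont : ∀ κ₀ : ℝ, 0 < κ₀ → ContinuousAt f κ₀ := by
    intro κ₀ hκ₀
    have hg_cont : ContinuousAt g κ₀ := by
      apply MeasureTheory.continuousAt_of_dominated (bound := fun x => ν * x ^ (-ν - 1))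
      · exact Eventually.of_forall (fun κ => hmeas κ)
      · filter_upwards [eventually_gt_nhds hκ₀] with κ hκ
        exact (ae_restrict_iff' measurableSet_Ioi).mpr (ae_of_all _ (habs κ (le_of_lt hκ)))
      · exact hbound_int
      · apply ae_of_all
        intro x
        apply ContinuousAt.mul _ continuousAt_const
        apply Real.continuous_exp.continuousAt.comp
        fun_prop
    have hpow_cont : ContinuousAt (fun κ => (lam * κ) ^ ν) κ₀ := by
      have h1 : ContinuousAt (fun x : ℝ => x ^ ν) (lam * κ₀) :=
        Real.continuousAt_rpow_const _ _ (Or.inl (by positivity))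
      exact h1.comp (by fun_prop)
    exact (((hg_cont.const_mul c).sub (((continuous_id.mul continuous_const).mul continuous_const).mul continuous_const).continuousAt).sub hpow_cont)
  -- limit of f at 0⁺
  have hf_lim : Tendsto f (nhdsWithin 0 (Set.Ioi 0)) (nhds c) := by
    have hg_lim : Tendsto g (nhdsWithin 0 (Set.Ioi 0)) (nhds 1) := by
      rw [← hI1]
      apply MeasureTheory.tendsto_integral_filter_of_dominated_convergence
        (fun x => ν * x ^ (-ν - 1))
      · exact Eventually.of_forall (fun κ => hmeas κ)
      · filter_upwards [self_mem_nhdsWithin] with κ hκ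
        exact (ae_restrict_iff' measurableSet_Ioi).mpr
          (ae_of_all _ (habs κ (le_of_lt (Set.mem_Ioi.mp hκ))))
      · exact hbound_int
      · apply ae_of_all
        intro x
        have : ContinuousAt (fun κ : ℝ => Real.exp (-(lam * κ * x)) * (ν * x ^ (-ν - 1))) 0 := by
          apply ContinuousAt.mul _ continuousAt_const
          apply Real.continuous_exp.continuousAt.comp
          fun_prop
        have h0 : Real.exp (-(lam * 0 * x)) * (ν * x ^ (-ν - 1)) = ν * x ^ (-ν - 1) := by
          simp
        have h2 := this.tendsto.mono_left (nhdsWithin_le_nhds (s := Set.Ioi 0))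
        rwa [h0] at h2
    have h2 : Tendsto (fun κ : ℝ => κ * γ * y ^ (ν - 1) * c) (nhdsWithin 0 (Set.Ioi 0))
        (nhds 0) := by
      have : Tendsto (fun κ : ℝ => κ * γ * y ^ (ν - 1) * c) (nhds 0)
          (nhds (0 * γ * y ^ (ν - 1) * c)) := (((continuous_id.mul continuous_const).mul continuous_const).mul continuous_const).tendsto 0
      rw [zero_mul, zero_mul, zero_mul] at this
      exact this.mono_left nhdsWithin_le_nhds
    have h3 : Tendsto (fun κ : ℝ => (lam * κ) ^ ν) (nhdsWithin 0 (Set.Ioi 0)) (nhds 0) := by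
      have hc : ContinuousAt (fun κ : ℝ => (lam * κ) ^ ν) 0 := by
        have h1 : ContinuousAt (fun x : ℝ => x ^ ν) (lam * 0) := by
          rw [mul_zero]
          exact Real.continuousAt_rpow_const 0 ν (Or.inr (le_of_lt hν0))
        exact h1.comp (by fun_prop)
      have h4 := hc.tendsto.mono_left (nhdsWithin_le_nhds (s := Set.Ioi 0))
      rwa [mul_zero, Real.zero_rpow (ne_of_gt hν0)] at h4
    have := ((hg_lim.const_mul c).sub h2).sub h3
    rw [mul_one, sub_zero, sub_zero] at this
    exact this
  -- choose b with f b < 0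
  set b : ℝ := (c + 1) ^ ν⁻¹ / lam with hbdef
  have hbpos : 0 < b := by
    have : (0:ℝ) < (c + 1) ^ ν⁻¹ := Real.rpow_pos_of_pos (by linarith) _
    positivity
  have hlamb : (lam * b) ^ ν = c + 1 := by
    rw [hbdef, mul_div_cancel₀ _ (ne_of_gt hlam)]
    exact Real.rpow_inv_rpow (by linarith) (ne_of_gt hν0)
  have hfb : f b < 0 := by
    simp only [hfdef]
    rw [hlamb]
    have h1 : c * g b ≤ c * 1 := mul_le_mul_of_nonneg_left (hg_le_one b (le_of_lt hbpos))
      (le_of_lt hcpos)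
    have h2 : 0 ≤ b * γ * y ^ (ν - 1) * c := by positivity
    linarith
  -- choose a with 0 < a < b and f a > 0
  obtain ⟨a, ha_mem, hfa, hab⟩ : ∃ a : ℝ, a ∈ Set.Ioi (0:ℝ) ∧ 0 < f a ∧ a < b := by
    have e1 : ∀ᶠ κ in nhdsWithin 0 (Set.Ioi 0), 0 < f κ :=
      hf_lim.eventually (eventually_gt_nhds hcpos)
    have e2 : ∀ᶠ κ in nhdsWithin 0 (Set.Ioi 0), κ < b :=
      eventually_nhdsWithin_of_eventually_nhds (eventually_lt_nhds hbpos)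
    have e3 : ∀ᶠ κ in nhdsWithin 0 (Set.Ioi 0), κ ∈ Set.Ioi (0:ℝ) := self_mem_nhdsWithin
    obtain ⟨a, h1, h2, h3⟩ := (e3.and (e1.and e2)).exists
    exact ⟨a, h1, h2, h3⟩
  have ha : (0:ℝ) < a := ha_mem
  -- IVT
  have hcont : ContinuousOn f (Set.Icc a b) := by
    intro κ hκ
    exact (hf_cont κ (lt_of_lt_of_le ha hκ.1)).continuousWithinAt
  obtain ⟨κ, hκ_mem, hκ_eq⟩ : ∃ κ ∈ Set.Icc a b, f κ = 0 := by
    have := intermediate_value_Icc' (le_of_lt hab) hcont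
    have h0 : (0:ℝ) ∈ Set.Icc (f b) (f a) := ⟨le_of_lt hfb, le_of_lt hfa⟩
    obtain ⟨κ, hκ1, hκ2⟩ := this h0
    exact ⟨κ, hκ1, hκ2⟩
  have hκpos : 0 < κ := lt_of_lt_of_le ha hκ_mem.1
  refine ⟨κ, ⟨hκpos, ?_⟩, ?_⟩
  · have : f κ = 0 := hκ_eq
    simp only [hfdef, hgdef] at this
    linarith [this]
  · rintro κ' ⟨hκ'pos, hκ'eq⟩
    have hfκ' : f κ' = 0 := by
      simp only [hfdef, hgdef]
      linarith [hκ'eq]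
    exact hf_anti.injOn (Set.mem_Ioi.mpr hκ'pos) (Set.mem_Ioi.mpr hκpos)
      (by rw [hfκ', hκ_eq])
end

section
/- Let m : [0,∞) → [0,1] solve Boxma's equation m(w) = ∫_0^w exp(-λt(1-m(w))) dF(t) for a fixed w > 0, where F is a distribution function on [0,∞) with λ∫_0^w t dF(t) ≤ ρ ≤ 1. If there exists C > 0 with e^{-λt} ≤ 1 - λt + Ct² for all relevant t, then (1-m(w))·(1 - λ∫_0^w t dF(t) + (1-m(w))·C∫_0^w t² dF(t)) ≥ 1 - F(w). -/
open Set MeasureTheory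

theorem boxma_lower_bound (lam ρ w C mw : ℝ)
    (μ : Measure ℝ) [IsProbabilityMeasure μ] (hsupp : μ (Set.Iio 0) = 0)
    (hlam : 0 < lam) (hw : 0 < w) (hC : 0 < C) (hρ : ρ ≤ 1)
    (hmw : mw ∈ Set.Icc (0 : ℝ) 1)
    (hmoment : lam * ∫ t in Set.Icc 0 w, t ∂μ ≤ ρ)
    (hBoxma : mw = ∫ t in Set.Icc 0 w, Real.exp (-(lam * (1 - mw) * t)) ∂μ)
    (hexp : ∀ t ∈ Set.Icc 0 w,
      Real.exp (-(lam * (1 - mw) * t)) ≤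
        1 - lam * (1 - mw) * t + C * ((1 - mw) * t) ^ 2) :
    (1 - mw) * (1 - lam * ∫ t in Set.Icc 0 w, t ∂μ
        + (1 - mw) * C * ∫ t in Set.Icc 0 w, t ^ 2 ∂μ)
      ≥ 1 - (μ (Set.Iic w)).toReal := by
  set u := 1 - mw with hu
  -- measure equality
  have hmeas_eq : μ (Set.Iic w) = μ (Set.Icc 0 w) := by
    apply le_antisymm
    · calc μ (Set.Iic w) ≤ μ (Set.Iio 0 ∪ Set.Icc 0 w) := by
            apply measure_mono
            intro x hx
            rcases lt_or_ge x 0 with h | h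
            · exact Or.inl h
            · exact Or.inr ⟨h, hx⟩
        _ ≤ μ (Set.Iio 0) + μ (Set.Icc 0 w) := measure_union_le _ _
        _ = μ (Set.Icc 0 w) := by rw [hsupp, zero_add]
    · exact measure_mono (fun x hx => hx.2)
  -- integrability
  have hms : MeasurableSet (Set.Icc (0:ℝ) w) := measurableSet_Icc
  have hint1 : IntegrableOn (fun t : ℝ => t) (Set.Icc 0 w) μ :=
    continuous_id.integrableOn_Icc
  have hint2 : IntegrableOn (fun t : ℝ => t ^ 2) (Set.Icc 0 w) μ :=
    (continuous_pow 2).integrableOn_Icc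
  have hintE : IntegrableOn (fun t : ℝ => Real.exp (-(lam * u * t))) (Set.Icc 0 w) μ :=
    (Real.continuous_exp.comp ((continuous_const.mul continuous_id).neg)).integrableOn_Icc
  have hintR : IntegrableOn (fun t : ℝ => 1 - lam * u * t + C * (u * t) ^ 2) (Set.Icc 0 w) μ := by
    apply Integrable.add
    · exact (integrable_const 1).sub (hint1.const_mul (lam * u))
    · have : IntegrableOn (fun t : ℝ => C * u ^ 2 * t ^ 2) (Set.Icc 0 w) μ :=
        hint2.const_mul _
      simpa [IntegrableOn, mul_pow, mul_comm, mul_assoc, mul_left_comm] using this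
  -- main inequality
  have hle : mw ≤ ∫ t in Set.Icc 0 w, (1 - lam * u * t + C * (u * t) ^ 2) ∂μ := by
    rw [hBoxma]
    exact setIntegral_mono_on hintE hintR hms hexp
  have hsplit : ∫ t in Set.Icc 0 w, (1 - lam * u * t + C * (u * t) ^ 2) ∂μ
      = (μ (Set.Icc 0 w)).toReal - lam * u * (∫ t in Set.Icc 0 w, t ∂μ)
        + C * u ^ 2 * (∫ t in Set.Icc 0 w, t ^ 2 ∂μ) := by
    have hcongr : ∫ t in Set.Icc 0 w, (1 - lam * u * t + C * (u * t) ^ 2) ∂μ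
        = ∫ t in Set.Icc 0 w, ((1 - lam * u * t) + C * u ^ 2 * t ^ 2) ∂μ := by
      apply integral_congr_ae
      filter_upwards with t
      ring
    have hA : IntegrableOn (fun t : ℝ => 1 - lam * u * t) (Set.Icc 0 w) μ :=
      (integrable_const 1).sub (hint1.const_mul (lam * u))
    have hB : IntegrableOn (fun t : ℝ => C * u ^ 2 * t ^ 2) (Set.Icc 0 w) μ :=
      hint2.const_mul _
    have hC1 : IntegrableOn (fun t : ℝ => (1:ℝ)) (Set.Icc 0 w) μ := integrable_const 1
    have hC2 : IntegrableOn (fun t : ℝ => lam * u * t) (Set.Icc 0 w) μ :=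
      hint1.const_mul (lam * u)
    rw [hcongr, integral_add hA hB, integral_sub hC1 hC2,
      integral_const_mul, integral_const_mul, setIntegral_const]
    simp [smul_eq_mul, Measure.real]
  have hprob : (μ (Set.Icc 0 w)).toReal = (μ (Set.Iic w)).toReal := by rw [hmeas_eq]
  rw [hsplit, hprob] at hle
  have hfin : u * (1 - lam * (∫ t in Set.Icc 0 w, t ∂μ)
      + u * C * (∫ t in Set.Icc 0 w, t ^ 2 ∂μ)) ≥ 1 - (μ (Set.Iic w)).toReal := by
    nlinarith [hle]
  exact hfin
end

section
/- Fix λ > 0 and a bounded continuous κ : (0,∞) → (0,∞), and let Z_t (t ≥ 0) have distribution function Φ(t,x) = exp(-λ∫_x^{x+t/λ} κ(y)/y dy) for x > 0 (and Φ(t,x)=0 for x ≤ 0, t > 0). Define T(t)f(x) = E[f(max(x - t/λ, Z_t))] for f in the space of continuous functions on [0,∞) vanishing at infinity. Then T(s)T(t) = T(s+t) for all s, t ≥ 0. -/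
open Filter Set MeasureTheory

theorem semigroup_property {Ω : Type*} [MeasurableSpace Ω]
    (μ : Measure Ω) [IsProbabilityMeasure μ] (lam : ℝ) (hlam : 0 < lam)
    (κ : ℝ → ℝ) (hκcont : ContinuousOn κ (Set.Ioi 0)) (hκpos : ∀ y > 0, 0 < κ y)
    (hκbdd : ∃ K : ℝ, ∀ y > 0, κ y ≤ K)
    (Z : ℝ → Ω → ℝ) (hZmeas : ∀ u, Measurable (Z u)) (hZnn : ∀ u, ∀ ω, 0 ≤ Z u ω)
    (hdist : ∀ u ≥ 0, ∀ x > 0, (μ {ω | Z u ω ≤ x}).toReal =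
      Real.exp (-(lam * ∫ y in x..(x + u / lam), κ y / y)))
    (T : ℝ → (ℝ → ℝ) → ℝ → ℝ)
    (hT : ∀ u ≥ 0, ∀ f : ℝ → ℝ, ∀ x : ℝ,
      T u f x = ∫ ω, f (max (x - u / lam) (Z u ω)) ∂μ) :
    ∀ f : ℝ → ℝ, Continuous f → Tendsto f atTop (nhds 0) →
      ∀ s ≥ 0, ∀ t ≥ 0, ∀ x ≥ 0, T s (T t f) x = T (s + t) f x := by
  intro f hfc hf0 s hs t ht x hx
  have hlam0 : lam ≠ 0 := ne_of_gt hlam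
  set c : ℝ := x - s / lam - t / lam with hc
  set g : ℝ → ℝ := fun w => f (max c w) with hg
  have hgcont : Continuous g := hfc.comp (continuous_const.max continuous_id)
  -- a bound on g
  obtain ⟨M, hM⟩ : ∃ M : ℝ, ∀ w : ℝ, ‖g w‖ ≤ M := by
    have h1 : ∀ᶠ w in atTop, f w ∈ Metric.ball (0:ℝ) 1 := hf0 (Metric.ball_mem_nhds 0 one_pos)
    obtain ⟨B, hB⟩ := eventually_atTop.mp h1
    obtain ⟨M₀, hM₀⟩ := (isCompact_Icc (a := c) (b := B)).exists_bound_of_continuousOn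
      hfc.continuousOn
    refine ⟨max M₀ 1, fun w => ?_⟩
    have hcw : c ≤ max c w := le_max_left _ _
    rcases le_or_gt (max c w) B with h | h
    · exact le_trans (hM₀ _ ⟨hcw, h⟩) (le_max_left _ _)
    · have := hB (max c w) h.le
      rw [Metric.mem_ball, dist_zero_right] at this
      exact le_trans this.le (le_max_right _ _)
  set W : Ω × Ω → ℝ := fun p => max (Z s p.1 - t / lam) (Z t p.2) with hWdef
  have hWmeas : Measurable W :=
    (((hZmeas s).comp measurable_fst).sub measurable_const).max ((hZmeas t).comp measurable_snd)
  -- interval integrability helper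
  have hci : ∀ p q : ℝ, 0 < p → 0 < q →
      IntervalIntegrable (fun y => κ y / y) MeasureTheory.volume p q := by
    intro p q hp hq
    apply ContinuousOn.intervalIntegrable
    have hsub : uIcc p q ⊆ Ioi (0:ℝ) := fun y hy => lt_of_lt_of_le (lt_min hp hq) hy.1
    exact ((hκcont.mono hsub).div (continuousOn_id) (fun y hy => ne_of_gt (hsub hy)))
  haveI : IsProbabilityMeasure (Measure.map W (μ.prod μ)) :=
    Measure.isProbabilityMeasure_map hWmeas.aemeasurable
  haveI : IsProbabilityMeasure (Measure.map (Z (s+t)) μ) :=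
    Measure.isProbabilityMeasure_map (hZmeas _).aemeasurable
  -- the key distributional identity
  have hpos : ∀ a : ℝ, 0 < a →
      Measure.map W (μ.prod μ) (Iic a) = Measure.map (Z (s+t)) μ (Iic a) := by
    intro a ha
    have hta : 0 < a + t / lam := add_pos_of_pos_of_nonneg ha (div_nonneg ht hlam.le)
    rw [Measure.map_apply hWmeas measurableSet_Iic,
      Measure.map_apply (hZmeas _) measurableSet_Iic]
    have hpre : W ⁻¹' Iic a = {ω | Z s ω ≤ a + t / lam} ×ˢ {ω | Z t ω ≤ a} := by
      ext p
      simp only [mem_preimage, mem_Iic, W, max_le_iff, Set.mem_prod, mem_setOf_eq,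
        sub_le_iff_le_add]
    have hpre2 : Z (s+t) ⁻¹' Iic a = {ω | Z (s+t) ω ≤ a} := rfl
    rw [hpre, hpre2, Measure.prod_prod]
    refine (ENNReal.toReal_eq_toReal_iff' (by finiteness) (by finiteness)).mp ?_
    rw [ENNReal.toReal_mul, hdist s hs _ hta, hdist t ht a ha, hdist (s+t) (by linarith) a ha,
      ← Real.exp_add]
    congr 1
    have heq : a + t / lam + s / lam = a + (s + t) / lam := by field_simp; ring
    have h1 := hci a (a + t / lam) ha hta
    have h2 := hci (a + t / lam) (a + (s + t) / lam) hta (by linarith [div_nonneg hs hlam.le])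
    have hadd := intervalIntegral.integral_add_adjacent_intervals h1 h2
    rw [heq, ← hadd]
    ring
  have hmapeq : Measure.map W (μ.prod μ) = Measure.map (Z (s+t)) μ := by
    apply Measure.ext_of_Iic
    intro a
    rcases lt_trichotomy a 0 with ha | ha | ha
    · have e1 : W ⁻¹' Iic a = (∅ : Set (Ω × Ω)) := by
        ext p
        simp only [mem_preimage, mem_Iic, W, max_le_iff, mem_empty_iff_false, iff_false]
        intro h
        exact absurd (le_trans (hZnn t p.2) h.2) (not_le.mpr ha)
      have e2 : Z (s+t) ⁻¹' Iic a = (∅ : Set Ω) := by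
        ext ω
        simp only [mem_preimage, mem_Iic, mem_empty_iff_false, iff_false]
        intro h
        exact absurd (le_trans (hZnn (s+t) ω) h) (not_le.mpr ha)
      rw [Measure.map_apply hWmeas measurableSet_Iic,
        Measure.map_apply (hZmeas _) measurableSet_Iic, e1, e2]
      simp
    · subst ha
      set ν₁ := Measure.map W (μ.prod μ)
      set ν₂ := Measure.map (Z (s+t)) μ
      have hanti : Antitone (fun n : ℕ => Iic (((n:ℝ)+1)⁻¹)) := by
        intro m n hmn
        apply Iic_subset_Iic.mpr
        apply inv_anti₀ (by positivity)
        exact_mod_cast by exact_mod_cast add_le_add (Nat.cast_le.mpr hmn) (le_refl 1)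
      have hiInter : (⋂ n : ℕ, Iic (((n:ℝ)+1)⁻¹)) = Iic (0:ℝ) := by
        ext y
        simp only [mem_iInter, mem_Iic]
        constructor
        · intro h
          by_contra hy
          push_neg at hy
          obtain ⟨n, hn⟩ := exists_nat_gt y⁻¹
          have hn' : ((n:ℝ)+1)⁻¹ < y := by
            rw [inv_lt_comm₀ (by positivity) hy]
            linarith
          exact absurd (h n) (not_le.mpr hn')
        · intro h n
          exact le_trans h (by positivity)
      have ht1 := tendsto_measure_iInter_atTop (μ := ν₁)
        (fun n => measurableSet_Iic.nullMeasurableSet) hanti ⟨0, measure_ne_top _ _⟩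
      have ht2 := tendsto_measure_iInter_atTop (μ := ν₂)
        (fun n => measurableSet_Iic.nullMeasurableSet) hanti ⟨0, measure_ne_top _ _⟩
      rw [hiInter] at ht1 ht2
      have heqfun : (ν₁ ∘ fun n : ℕ => Iic (((n:ℝ)+1)⁻¹))
          = (ν₂ ∘ fun n : ℕ => Iic (((n:ℝ)+1)⁻¹)) := by
        funext n
        exact hpos _ (by positivity)
      rw [heqfun] at ht1
      exact tendsto_nhds_unique ht1 ht2
    · exact hpos a ha
  -- rewrite both sides
  have hRHS : T (s+t) f x = ∫ ω, g (Z (s+t) ω) ∂μ := by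
    rw [hT (s+t) (by linarith) f x]
    congr 1
    funext ω
    have hxe : x - (s+t)/lam = c := by rw [hc, add_div]; ring
    rw [hxe]
  have hLHS : T s (T t f) x = ∫ ω, ∫ ω', g (W (ω, ω')) ∂μ ∂μ := by
    rw [hT s hs]
    congr 1
    funext ω
    rw [hT t ht]
    congr 1
    funext ω'
    show f _ = f _
    congr 1
    rw [← max_sub_sub_right, max_assoc]
  rw [hLHS, hRHS]
  have hInt : Integrable (Function.uncurry fun ω ω' => g (W (ω, ω'))) (μ.prod μ) := by
    refine ⟨(hgcont.measurable.comp hWmeas).aestronglyMeasurable.congr ?_,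
      HasFiniteIntegral.of_bounded (C := M) (ae_of_all _ fun p => hM _)⟩
    · filter_upwards with p; rfl
  calc ∫ ω, ∫ ω', g (W (ω, ω')) ∂μ ∂μ
      = ∫ p, g (W p) ∂(μ.prod μ) := by
        rw [MeasureTheory.integral_integral hInt]
    _ = ∫ w, g w ∂(Measure.map W (μ.prod μ)) :=
        (integral_map hWmeas.aemeasurable hgcont.aestronglyMeasurable).symm
    _ = ∫ w, g w ∂(Measure.map (Z (s+t)) μ) := by rw [hmapeq]
    _ = ∫ ω, g (Z (s+t) ω) ∂μ :=
        integral_map (hZmeas _).aemeasurable hgcont.aestronglyMeasurable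
end

section
/- Let T_n f(x) = E[f(max(x - I/n, M/n))] where I and M are independent nonnegative random variables (I exponential with rate λ_n). Then the k-th iterate satisfies T_n^k f(x) = E[f(max(x - (1/n)Σ_{j=1}^k I_j, (1/n)·max_{1≤i≤k}(M_i - Σ_{j=i}^{k-1} I_j)))], where (I_j) and (M_i) are independent i.i.d. copies of I and M respectively. -/
open Filter Set Finset MeasureTheory ProbabilityTheory

/-! ### Auxiliary independence lemmas -/

lemma meas_biInter_comp {Ω : Type*} [MeasurableSpace Ω] {μ : Measure Ω}
    {ιt : Type*} {F : ιt → Ω → ℝ}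
    (hindep : iIndepFun F μ)
    {κt : Type*} (S : Finset κt) (g : κt → ιt) (hg : Set.InjOn g S)
    (s : κt → Set ℝ) (hs : ∀ a ∈ S, MeasurableSet (s a)) :
    μ (⋂ a ∈ S, F (g a) ⁻¹' s a) = ∏ a ∈ S, μ (F (g a) ⁻¹' s a) := by
  classical
  set sets : ιt → Set ℝ := fun b => if h : ∃ a ∈ S, g a = b then s h.choose else Set.univ
    with hsets
  have hchoose : ∀ a ∈ S, sets (g a) = s a := by
    intro a ha
    have hex : ∃ a' ∈ S, g a' = g a := ⟨a, ha, rfl⟩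
    rw [hsets]
    dsimp only
    rw [dif_pos hex]
    exact congrArg s (hg hex.choose_spec.1 ha hex.choose_spec.2)
  have hmeas : ∀ b ∈ S.image g, MeasurableSet (sets b) := by
    intro b hb
    rw [hsets]
    dsimp only
    split
    · next h => exact hs _ h.choose_spec.1
    · exact MeasurableSet.univ
  have h1 := hindep.measure_inter_preimage_eq_mul (S.image g) hmeas
  have hInter : (⋂ b ∈ S.image g, F b ⁻¹' sets b) = ⋂ a ∈ S, F (g a) ⁻¹' s a := by
    ext ω
    simp only [Set.mem_iInter, Finset.mem_image, Set.mem_preimage]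
    constructor
    · intro h a ha
      have := h (g a) ⟨a, ha, rfl⟩
      rwa [hchoose a ha] at this
    · rintro h b ⟨a, ha, rfl⟩
      rw [hchoose a ha]
      exact h a ha
  rw [hInter] at h1
  rw [h1, Finset.prod_image (fun a ha b hb hab => hg ha hb hab)]
  exact Finset.prod_congr rfl fun a ha => by rw [hchoose a ha]

lemma map_tuple_eq_pi {Ω : Type*} [MeasurableSpace Ω] (μ : Measure Ω) [IsProbabilityMeasure μ]
    {ιt : Type*} {F : ιt → Ω → ℝ} (hFmeas : ∀ i, Measurable (F i))
    (hindep : iIndepFun F μ)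
    {κt : Type*} [Fintype κt] (g : κt → ιt) (hg : Function.Injective g) :
    μ.map (fun ω a => F (g a) ω) = Measure.pi (fun a => μ.map (F (g a))) := by
  haveI : ∀ a, IsProbabilityMeasure (μ.map (F (g a))) :=
    fun a => Measure.isProbabilityMeasure_map (hFmeas (g a)).aemeasurable
  refine (Measure.pi_eq fun s hs => ?_).symm
  rw [Measure.map_apply (measurable_pi_lambda _ fun a => hFmeas (g a)) (MeasurableSet.univ_pi hs)]
  have hpre : (fun ω a => F (g a) ω) ⁻¹' (Set.univ.pi s) =
      ⋂ a ∈ (Finset.univ : Finset κt), F (g a) ⁻¹' s a := by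
    ext ω
    simp [Set.mem_pi]
  rw [hpre, meas_biInter_comp hindep Finset.univ g hg.injOn s (fun a _ => hs a)]
  exact Finset.prod_congr rfl fun a _ => (Measure.map_apply (hFmeas (g a)) (hs a)).symm

/-! ### Reindexing helpers -/

lemma sum_Icc_shift (g : ℕ → ℝ) (a b : ℕ) :
    ∑ j ∈ Finset.Icc (1+a) (1+b), g j = ∑ j ∈ Finset.Icc a b, g (1+j) := by
  rw [← Finset.map_add_left_Icc a b 1, Finset.sum_map]
  rfl

lemma sup_Icc_shift (g : ℕ → ℝ) (a b : ℕ) (h : (Finset.Icc (1+a) (1+b)).Nonempty)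
    (h' : (Finset.Icc a b).Nonempty) :
    (Finset.Icc (1+a) (1+b)).sup' h g = (Finset.Icc a b).sup' h' (fun j => g (1+j)) := by
  have hmap : Finset.Icc (1+a) (1+b) = (Finset.Icc a b).map (addLeftEmbedding 1) :=
    (Finset.map_add_left_Icc a b 1).symm
  rw [Finset.sup'_congr h hmap (fun x _ => rfl), Finset.sup'_map]
  rfl

lemma measurable_sup'_fin {δ : Type*} [MeasurableSpace δ] {ι' : Type*} {s : Finset ι'}
    (hs : s.Nonempty) (g : ι' → δ → ℝ) (hg : ∀ i, Measurable (g i)) :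
    Measurable fun z => s.sup' hs fun i => g i z := by
  induction hs using Finset.Nonempty.cons_induction with
  | singleton a => simpa using hg a
  | cons a s ha hs ih =>
    have : (fun z => (Finset.cons a s ha).sup' (Finset.cons_nonempty ha) fun i => g i z)
        = fun z => max (g a z) (s.sup' hs fun i => g i z) := by
      funext z
      rw [Finset.sup'_cons]
    rw [this]
    exact (hg a).max ih

/-! ### The coordinate reading function -/

noncomputable def coordI (k : ℕ) (z : Fin (k+1) ⊕ Fin (k+1) → ℝ) (j : ℕ) : ℝ :=
  if h : 1 ≤ j ∧ j ≤ k+1 then z (Sum.inl ⟨j-1, by omega⟩) else 0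

noncomputable def coordM (k : ℕ) (z : Fin (k+1) ⊕ Fin (k+1) → ℝ) (i : ℕ) : ℝ :=
  if h : 1 ≤ i ∧ i ≤ k+1 then z (Sum.inr ⟨i-1, by omega⟩) else 0

noncomputable def Gfun (k : ℕ) (f : ℝ → ℝ) (c x : ℝ) (z : Fin (k+1) ⊕ Fin (k+1) → ℝ) : ℝ :=
  f (max (x - c * ∑ j ∈ Finset.Icc 1 (k+1), coordI k z j)
      (c * (Finset.Icc 1 (k+1)).sup' ⟨1, by simp⟩
        (fun i => coordM k z i - ∑ j ∈ Finset.Icc i k, coordI k z j)))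

lemma measurable_coordI (k j : ℕ) : Measurable fun z => coordI k z j := by
  unfold coordI
  by_cases h : 1 ≤ j ∧ j ≤ k+1
  · simp only [dif_pos h]; exact measurable_pi_apply _
  · simp only [dif_neg h]; exact measurable_const

lemma measurable_coordM (k i : ℕ) : Measurable fun z => coordM k z i := by
  unfold coordM
  by_cases h : 1 ≤ i ∧ i ≤ k+1
  · simp only [dif_pos h]; exact measurable_pi_apply _
  · simp only [dif_neg h]; exact measurable_const

lemma measurable_Gfun (k : ℕ) (f : ℝ → ℝ) (c x : ℝ) (hf : Measurable f) :
    Measurable (Gfun k f c x) := by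
  unfold Gfun
  apply hf.comp
  apply Measurable.max
  · exact measurable_const.sub
      ((Finset.measurable_sum _ fun j _ => measurable_coordI k j).const_mul c)
  · apply Measurable.const_mul
    exact measurable_sup'_fin _ _ fun i =>
      (measurable_coordM k i).sub (Finset.measurable_sum _ fun j _ => measurable_coordI k j)

/-! ### Tuple functions and their evaluations -/

def tupFun {Ω : Type*} (I M : ℕ → Ω → ℝ) (k : ℕ) (ω : Ω) (a : Fin (k+1) ⊕ Fin (k+1)) : ℝ :=
  Sum.elim I M (Sum.map (fun j : Fin (k+1) => (j:ℕ)+1) (fun i : Fin (k+1) => (i:ℕ)+1) a) ω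

def Pfun {Ω : Type*} (I M : ℕ → Ω → ℝ) (k : ℕ) (p : Ω × Ω) (a : Fin (k+1) ⊕ Fin (k+1)) : ℝ :=
  Sum.elim
    (fun j : Fin (k+1) => if (j:ℕ) = k then I 1 p.1 else if (j:ℕ) = 0 then I k p.2 else I j p.2)
    (fun i : Fin (k+1) => if (i:ℕ) = 0 then M 1 p.1 else M i p.2) a

lemma measurable_tupFun {Ω : Type*} [MeasurableSpace Ω] (I M : ℕ → Ω → ℝ)
    (hImeas : ∀ j, Measurable (I j)) (hMmeas : ∀ i, Measurable (M i)) (k : ℕ) :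
    Measurable (tupFun I M k) := by
  apply measurable_pi_lambda
  rintro (j|i)
  · exact hImeas _
  · exact hMmeas _

lemma measurable_Pfun {Ω : Type*} [MeasurableSpace Ω] (I M : ℕ → Ω → ℝ)
    (hImeas : ∀ j, Measurable (I j)) (hMmeas : ∀ i, Measurable (M i)) (k : ℕ) :
    Measurable (Pfun I M k) := by
  apply measurable_pi_lambda
  rintro (j|i)
  · show Measurable fun p : Ω × Ω =>
      (if (j:ℕ) = k then I 1 p.1 else if (j:ℕ) = 0 then I k p.2 else I j p.2)
    split_ifs
    · exact (hImeas 1).comp measurable_fst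
    · exact (hImeas k).comp measurable_snd
    · exact (hImeas j).comp measurable_snd
  · show Measurable fun p : Ω × Ω => (if (i:ℕ) = 0 then M 1 p.1 else M i p.2)
    split_ifs
    · exact (hMmeas 1).comp measurable_fst
    · exact (hMmeas i).comp measurable_snd

lemma Gfun_tup {Ω : Type*} (I M : ℕ → Ω → ℝ) (k : ℕ) (f : ℝ → ℝ) (c x : ℝ) (ω : Ω) :
    Gfun k f c x (tupFun I M k ω) =
      f (max (x - c * ∑ j ∈ Finset.Icc 1 (k+1), I j ω)
        (c * (Finset.Icc 1 (k+1)).sup' ⟨1, by simp⟩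
          (fun i => M i ω - ∑ j ∈ Finset.Icc i k, I j ω))) := by
  have hcI : ∀ j ∈ Finset.Icc 1 (k+1), coordI k (tupFun I M k ω) j = I j ω := by
    intro j hj
    rw [Finset.mem_Icc] at hj
    rw [coordI, dif_pos hj]
    show I (j - 1 + 1) ω = I j ω
    congr 1
    omega
  have hcM : ∀ i ∈ Finset.Icc 1 (k+1), coordM k (tupFun I M k ω) i = M i ω := by
    intro i hi
    rw [Finset.mem_Icc] at hi
    rw [coordM, dif_pos hi]
    show M (i - 1 + 1) ω = M i ω
    congr 1
    omega
  unfold Gfun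
  congr 1
  congr 1
  · congr 1
    exact congrArg (c * ·) (Finset.sum_congr rfl hcI)
  · congr 1
    apply Finset.sup'_congr _ rfl
    intro i hi
    rw [hcM i hi]
    congr 1
    apply Finset.sum_congr rfl
    intro j hj
    rw [Finset.mem_Icc] at hi hj
    exact hcI j (Finset.mem_Icc.mpr ⟨le_trans hi.1 hj.1, le_trans hj.2 (Nat.le_succ k)⟩)

lemma Gfun_P {Ω : Type*} (I M : ℕ → Ω → ℝ) {k : ℕ} (hk : 1 ≤ k) (f : ℝ → ℝ) (c x : ℝ)
    (ω ω' : Ω) :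
    Gfun k f c x (Pfun I M k (ω, ω')) =
      f (max (x - c * (∑ j ∈ Finset.Icc 1 k, I j ω' + I 1 ω))
        (c * max (M 1 ω - ∑ j ∈ Finset.Icc 1 k, I j ω')
          ((Finset.Icc 1 k).sup' ⟨1, Finset.mem_Icc.mpr ⟨le_refl 1, hk⟩⟩
            (fun i => M i ω' - ∑ j ∈ Finset.Icc i (k-1), I j ω')))) := by
  set z := Pfun I M k (ω, ω') with hz
  have hcmid : ∀ j, 2 ≤ j → j ≤ k → coordI k z j = I (j-1) ω' := by
    intro j h2 hjk
    rw [coordI, dif_pos ⟨by omega, by omega⟩]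
    show (if (j-1 : ℕ) = k then I 1 ω else if (j-1 : ℕ) = 0 then I k ω' else I (j-1) ω') = _
    rw [if_neg (by omega), if_neg (by omega)]
  have hc1 : coordI k z 1 = I k ω' := by
    rw [coordI, dif_pos ⟨le_refl 1, by omega⟩]
    show (if (0 : ℕ) = k then I 1 ω else if (0 : ℕ) = 0 then I k ω' else I 0 ω') = _
    rw [if_neg (by omega), if_pos rfl]
  have hctop : coordI k z (k+1) = I 1 ω := by
    rw [coordI, dif_pos ⟨by omega, le_refl _⟩]
    show (if (k+1-1 : ℕ) = k then I 1 ω else _) = _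
    rw [if_pos (by omega)]
  have hcM1 : coordM k z 1 = M 1 ω := by
    rw [coordM, dif_pos ⟨le_refl 1, by omega⟩]
    show (if (0 : ℕ) = 0 then M 1 ω else M 0 ω') = _
    rw [if_pos rfl]
  have hcM : ∀ i, 2 ≤ i → i ≤ k+1 → coordM k z i = M (i-1) ω' := by
    intro i h2 hik
    rw [coordM, dif_pos ⟨by omega, hik⟩]
    show (if (i-1 : ℕ) = 0 then M 1 ω else M (i-1) ω') = _
    rw [if_neg (by omega)]
  have hins : Finset.Icc 1 k = insert 1 (Finset.Icc 2 k) := by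
    ext j; simp only [Finset.mem_Icc, Finset.mem_insert]; omega
  have hsum0 : ∑ j ∈ Finset.Icc 1 k, coordI k z j = ∑ j ∈ Finset.Icc 1 k, I j ω' := by
    have h2k : (Finset.Icc 2 k) = Finset.Icc (1+1) (1+(k-1)) := by congr 1; omega
    have hcong : ∀ j ∈ Finset.Icc 1 (k-1), coordI k z (1+j) = I j ω' := by
      intro j hj
      rw [Finset.mem_Icc] at hj
      rw [hcmid (1+j) (by omega) (by omega)]
      congr 1
      omega
    have hk1 : k = (k-1) + 1 := by omega
    have hL : ∑ j ∈ Finset.Icc 1 k, coordI k z j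
        = I k ω' + ∑ j ∈ Finset.Icc 1 (k-1), I j ω' := by
      rw [hins, Finset.sum_insert (by simp), hc1, h2k, sum_Icc_shift,
        Finset.sum_congr rfl hcong]
    have hR : ∑ j ∈ Finset.Icc 1 k, I j ω'
        = ∑ j ∈ Finset.Icc 1 (k-1), I j ω' + I k ω' := by
      conv_lhs => rw [hk1]
      rw [Finset.sum_Icc_succ_top (by omega), ← hk1]
    rw [hL, hR]
    ring
  have hsumtot : ∑ j ∈ Finset.Icc 1 (k+1), coordI k z j
      = ∑ j ∈ Finset.Icc 1 k, I j ω' + I 1 ω := by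
    rw [Finset.sum_Icc_succ_top (by omega), hsum0, hctop]
  have hne2 : (Finset.Icc 2 (k+1)).Nonempty := ⟨2, Finset.mem_Icc.mpr ⟨le_refl 2, by omega⟩⟩
  have hins2 : Finset.Icc 1 (k+1) = insert 1 (Finset.Icc 2 (k+1)) := by
    ext j; simp only [Finset.mem_Icc, Finset.mem_insert]; omega
  have hsup : (Finset.Icc 1 (k+1)).sup' (Finset.nonempty_Icc.mpr (by omega))
        (fun i => coordM k z i - ∑ j ∈ Finset.Icc i k, coordI k z j)
      = max (M 1 ω - ∑ j ∈ Finset.Icc 1 k, I j ω')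
          ((Finset.Icc 1 k).sup' ⟨1, Finset.mem_Icc.mpr ⟨le_refl 1, hk⟩⟩
            (fun i => M i ω' - ∑ j ∈ Finset.Icc i (k-1), I j ω')) := by
    rw [Finset.sup'_congr _ hins2 (fun _ _ => rfl)]
    rw [Finset.sup'_insert (H := hne2)]
    have hterm1 : coordM k z 1 - ∑ j ∈ Finset.Icc 1 k, coordI k z j
        = M 1 ω - ∑ j ∈ Finset.Icc 1 k, I j ω' := by rw [hcM1, hsum0]
    have h2k1 : Finset.Icc 2 (k+1) = Finset.Icc (1+1) (1+k) := by congr 1; omega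
    have hshift : (Finset.Icc 2 (k+1)).sup' hne2
          (fun i => coordM k z i - ∑ j ∈ Finset.Icc i k, coordI k z j)
        = (Finset.Icc 1 k).sup' ⟨1, Finset.mem_Icc.mpr ⟨le_refl 1, hk⟩⟩
            (fun i => M i ω' - ∑ j ∈ Finset.Icc i (k-1), I j ω') := by
      rw [Finset.sup'_congr hne2 h2k1 (fun _ _ => rfl),
        sup_Icc_shift _ 1 k _ ⟨1, Finset.mem_Icc.mpr ⟨le_refl 1, hk⟩⟩]
      refine Finset.sup'_congr _ rfl fun i hi => ?_
      rw [Finset.mem_Icc] at hi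
      rw [hcM (1+i) (by omega) (by omega)]
      have hishift : Finset.Icc (1+i) k = Finset.Icc (1+i) (1+(k-1)) := by congr 1; omega
      rw [hishift, sum_Icc_shift]
      have : ∀ j ∈ Finset.Icc i (k-1), coordI k z (1+j) = I j ω' := by
        intro j hj
        rw [Finset.mem_Icc] at hj
        rw [hcmid (1+j) (by omega) (by omega)]
        congr 1
        omega
      rw [Finset.sum_congr rfl this, show 1 + i - 1 = i from by omega]
    rw [hterm1, hshift]
  unfold Gfun
  rw [hsumtot, hsup]

lemma max_shuffle (c x A B S T : ℝ) (hc : 0 ≤ c) :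
    max (max (x - c*A) (c*B) - c*S) (c*T) = max (x - c*(S + A)) (c * max (B - S) T) := by
  rw [← max_sub_sub_right, max_assoc, mul_max_of_nonneg _ _ hc, mul_sub]
  congr 1
  ring

/-! ### Distribution identities -/

lemma law_tup {Ω : Type*} [MeasurableSpace Ω] (μ : Measure Ω) [IsProbabilityMeasure μ]
    (lamn : ℝ) (I M : ℕ → Ω → ℝ)
    (hImeas : ∀ j, Measurable (I j)) (hMmeas : ∀ i, Measurable (M i))
    (hindep : iIndepFun (Sum.elim I M) μ)
    (hIexp : ∀ j, μ.map (I j) = expMeasure lamn)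
    (hMid : ∀ i i', μ.map (M i) = μ.map (M i')) (k : ℕ) :
    μ.map (tupFun I M k) =
      Measure.pi (Sum.elim (fun _ : Fin (k+1) => expMeasure lamn)
        (fun _ : Fin (k+1) => μ.map (M 1))) := by
  have hXmeas : ∀ b : ℕ ⊕ ℕ, Measurable (Sum.elim I M b) := by
    rintro (j|i)
    exacts [hImeas j, hMmeas i]
  have hinj : Function.Injective
      (Sum.map (fun j : Fin (k+1) => (j:ℕ)+1) (fun i : Fin (k+1) => (i:ℕ)+1)) := by
    rintro (a|a) (b|b) h
    · simp only [Sum.map_inl, Sum.inl.injEq] at h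
      exact congrArg Sum.inl (Fin.ext (by omega))
    · simp at h
    · simp at h
    · simp only [Sum.map_inr, Sum.inr.injEq] at h
      exact congrArg Sum.inr (Fin.ext (by omega))
  have h := map_tuple_eq_pi μ hXmeas hindep _ hinj
  refine Eq.trans (by exact h) ?_
  congr 1
  funext a
  rcases a with j | i
  · simp only [Sum.map_inl, Sum.elim_inl]
    exact hIexp _
  · simp only [Sum.map_inr, Sum.elim_inr]
    exact hMid _ 1

lemma law_P {Ω : Type*} [MeasurableSpace Ω] (μ : Measure Ω) [IsProbabilityMeasure μ]
    (lamn : ℝ) (hlamn : 0 < lamn) (I M : ℕ → Ω → ℝ)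
    (hImeas : ∀ j, Measurable (I j)) (hMmeas : ∀ i, Measurable (M i))
    (hindep : iIndepFun (Sum.elim I M) μ)
    (hIexp : ∀ j, μ.map (I j) = expMeasure lamn)
    (hMid : ∀ i i', μ.map (M i) = μ.map (M i')) {k : ℕ} (hk : 1 ≤ k) :
    (μ.prod μ).map (Pfun I M k) =
      Measure.pi (Sum.elim (fun _ : Fin (k+1) => expMeasure lamn)
        (fun _ : Fin (k+1) => μ.map (M 1))) := by
  classical
  haveI hP1 : IsProbabilityMeasure (expMeasure lamn) := isProbabilityMeasure_expMeasure hlamn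
  haveI hP2 : IsProbabilityMeasure (μ.map (M 1)) :=
    Measure.isProbabilityMeasure_map (hMmeas 1).aemeasurable
  haveI : ∀ a : Fin (k+1) ⊕ Fin (k+1), IsProbabilityMeasure
      ((Sum.elim (fun _ : Fin (k+1) => expMeasure lamn)
        (fun _ : Fin (k+1) => μ.map (M 1))) a) := by
    rintro (a|a) <;> dsimp <;> infer_instance
  have hPmeas : Measurable (Pfun I M k) := measurable_Pfun I M hImeas hMmeas k
  refine (Measure.pi_eq fun s hs => ?_).symm
  rw [Measure.map_apply hPmeas (MeasurableSet.univ_pi hs)]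
  set lastI : Fin (k+1) := ⟨k, by omega⟩ with hlastI
  have hlastval : (lastI : ℕ) = k := rfl
  have hzeroval : ((0 : Fin (k+1)) : ℕ) = 0 := rfl
  set A : Set Ω := (I 1 ⁻¹' s (Sum.inl lastI)) ∩ (M 1 ⁻¹' s (Sum.inr 0)) with hA
  set SB : Finset (Fin (k+1) ⊕ Fin (k+1)) :=
    (Finset.univ.erase (Sum.inl lastI)).erase (Sum.inr 0) with hSB
  set gB : Fin (k+1) ⊕ Fin (k+1) → ℕ ⊕ ℕ :=
    Sum.elim (fun j => Sum.inl (if (j:ℕ) = 0 then k else (j:ℕ)))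
      (fun i => Sum.inr (i:ℕ)) with hgB
  have hmemSB : ∀ a, a ∈ SB ↔ (a ≠ Sum.inr 0 ∧ a ≠ Sum.inl lastI) := by
    intro a
    simp [hSB, Finset.mem_erase]
  have hsplit : Pfun I M k ⁻¹' Set.univ.pi s
      = A ×ˢ (⋂ a ∈ SB, Sum.elim I M (gB a) ⁻¹' s a) := by
    ext ⟨ω, ω'⟩
    simp only [Set.mem_preimage, Set.mem_pi, Set.mem_univ, true_implies, Set.mem_prod,
      hA, Set.mem_inter_iff, Set.mem_iInter]
    constructor
    · intro h
      refine ⟨⟨?_, ?_⟩, ?_⟩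
      · have := h (Sum.inl lastI)
        simpa [Pfun, hlastval] using this
      · have := h (Sum.inr 0)
        simpa [Pfun, hzeroval] using this
      · intro a ha
        rw [hmemSB] at ha
        rcases a with j | i
        · have hj : (j:ℕ) ≠ k := fun hc => ha.2 (congrArg Sum.inl (Fin.ext hc))
          have := h (Sum.inl j)
          simp only [Pfun, Sum.elim_inl, if_neg hj] at this
          simp only [hgB, Sum.elim_inl]
          by_cases h0 : (j:ℕ) = 0
          · simpa [h0] using this
          · simpa [h0] using this
        · have hi : (i:ℕ) ≠ 0 := fun hc => ha.1 (congrArg Sum.inr (Fin.ext hc))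
          have := h (Sum.inr i)
          simp only [Pfun, Sum.elim_inr, if_neg hi] at this
          simpa [hgB] using this
    · rintro ⟨⟨h1, h2⟩, h3⟩ a
      rcases a with j | i
      · by_cases hj : (j:ℕ) = k
        · have hjl : j = lastI := Fin.ext (by rw [hlastval]; exact hj)
          rw [hjl]
          simpa [Pfun, hlastval] using h1
        · have hmem : (Sum.inl j : Fin (k+1) ⊕ Fin (k+1)) ∈ SB := by
            rw [hmemSB]
            refine ⟨by simp, fun hc => hj ?_⟩
            have hjeq : j = lastI := Sum.inl.inj hc
            rw [hjeq, hlastval]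
          have := h3 _ hmem
          simp only [hgB, Sum.elim_inl] at this
          simp only [Pfun, Sum.elim_inl, if_neg hj]
          by_cases h0 : (j:ℕ) = 0
          · simpa [h0] using this
          · simpa [h0] using this
      · by_cases hi : (i:ℕ) = 0
        · have hiz : i = 0 := Fin.ext (by rw [hzeroval]; exact hi)
          rw [hiz]
          simpa [Pfun, hzeroval] using h2
        · have hmem : (Sum.inr i : Fin (k+1) ⊕ Fin (k+1)) ∈ SB := by
            rw [hmemSB]
            refine ⟨fun hc => hi ?_, by simp⟩
            have hieq : i = 0 := Sum.inr.inj hc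
            rw [hieq, hzeroval]
          have := h3 _ hmem
          simp only [hgB, Sum.elim_inr] at this
          simp only [Pfun, Sum.elim_inr, if_neg hi]
          exact this
  rw [hsplit, Measure.prod_prod]
  have hIM : IndepFun (I 1) (M 1) μ := by
    have h := hindep.indepFun (i := Sum.inl 1) (j := Sum.inr 1) (by simp)
    exact h
  have hμA : μ A = (expMeasure lamn) (s (Sum.inl lastI)) * (μ.map (M 1)) (s (Sum.inr 0)) := by
    rw [hA, hIM.measure_inter_preimage_eq_mul _ _ (hs _) (hs _),
      ← Measure.map_apply (hImeas 1) (hs _), ← Measure.map_apply (hMmeas 1) (hs _), hIexp 1]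
  have hInjOn : Set.InjOn gB SB := by
    rintro (a|a) ha (b|b) hb h
    · have ha' : (a:ℕ) ≠ k := by
        rw [Finset.mem_coe, hmemSB] at ha
        exact fun hc => ha.2 (congrArg Sum.inl (Fin.ext hc))
      have hb' : (b:ℕ) ≠ k := by
        rw [Finset.mem_coe, hmemSB] at hb
        exact fun hc => hb.2 (congrArg Sum.inl (Fin.ext hc))
      simp only [hgB, Sum.elim_inl, Sum.inl.injEq] at h
      refine congrArg Sum.inl (Fin.ext ?_)
      have hak : (a:ℕ) < k + 1 := a.isLt
      have hbk : (b:ℕ) < k + 1 := b.isLt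
      split_ifs at h <;> omega
    · simp [hgB] at h
    · simp [hgB] at h
    · simp only [hgB, Sum.elim_inr, Sum.inr.injEq] at h
      exact congrArg Sum.inr (Fin.ext h)
  have hμB : μ (⋂ a ∈ SB, Sum.elim I M (gB a) ⁻¹' s a)
      = ∏ a ∈ SB, (Sum.elim (fun _ : Fin (k+1) => expMeasure lamn)
          (fun _ : Fin (k+1) => μ.map (M 1)) a) (s a) := by
    rw [meas_biInter_comp hindep SB gB hInjOn s (fun a _ => hs a)]
    refine Finset.prod_congr rfl ?_
    rintro (j|i) ha
    · show μ (Sum.elim I M (Sum.inl _) ⁻¹' _) = _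
      simp only [Sum.elim_inl]
      rw [← Measure.map_apply (hImeas _) (hs _), hIexp]
    · show μ (Sum.elim I M (Sum.inr _) ⁻¹' _) = _
      simp only [Sum.elim_inr]
      rw [← Measure.map_apply (hMmeas _) (hs _), hMid _ 1]
  rw [hμA, hμB]
  have h1 : (Sum.inl lastI : Fin (k+1) ⊕ Fin (k+1)) ∈ Finset.univ := Finset.mem_univ _
  have h2 : (Sum.inr 0 : Fin (k+1) ⊕ Fin (k+1)) ∈ Finset.univ.erase (Sum.inl lastI) := by
    simp
  rw [← Finset.mul_prod_erase _ _ h1, ← Finset.mul_prod_erase _ _ h2]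
  simp only [Sum.elim_inl, Sum.elim_inr]
  ring

/-! ### Main theorem -/

theorem iterate_transition_operator {Ω : Type*} [MeasurableSpace Ω]
    (μ : Measure Ω) [IsProbabilityMeasure μ] (n : ℕ) (hn : 1 ≤ n)
    (lamn : ℝ) (hlamn : 0 < lamn)
    (I M : ℕ → Ω → ℝ)
    (hImeas : ∀ j, Measurable (I j)) (hMmeas : ∀ i, Measurable (M i))
    (hMnn : ∀ i ω, 0 ≤ M i ω)
    (hindep : iIndepFun (Sum.elim I M) μ)
    (hIexp : ∀ j, μ.map (I j) = ProbabilityTheory.expMeasure lamn)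
    (hMid : ∀ i i', μ.map (M i) = μ.map (M i'))
    (f : ℝ → ℝ) (hfmeas : Measurable f) (hfbdd : ∃ Cf : ℝ, ∀ x, |f x| ≤ Cf)
    (Tn : (ℝ → ℝ) → ℝ → ℝ)
    (hTn : ∀ g : ℝ → ℝ, ∀ x : ℝ,
      Tn g x = ∫ ω, g (max (x - I 1 ω / n) (M 1 ω / n)) ∂μ) :
    ∀ k : ℕ, 1 ≤ k → ∀ x : ℝ, ∀ hne : (Finset.Icc 1 k).Nonempty,
      Tn^[k] f x = ∫ ω, f (max
        (x - (1 / (n : ℝ)) * ∑ j ∈ Finset.Icc 1 k, I j ω)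
        ((1 / (n : ℝ)) * (Finset.Icc 1 k).sup' hne
          (fun i => M i ω - ∑ j ∈ Finset.Icc i (k - 1), I j ω))) ∂μ := by
  obtain ⟨Cf, hCf⟩ := hfbdd
  have hn0 : (n:ℝ) ≠ 0 := Nat.cast_ne_zero.mpr (by omega)
  have hc : (0:ℝ) ≤ 1 / (n:ℝ) := by positivity
  have hdiv : ∀ a : ℝ, a / (n:ℝ) = (1/(n:ℝ)) * a := fun a => by ring
  intro k hk
  induction k, hk using Nat.le_induction with
  | base =>
    intro x hne
    rw [Function.iterate_one, hTn]
    apply integral_congr_ae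
    filter_upwards with ω
    congr 1
    have e1 : ∑ j ∈ Finset.Icc 1 1, I j ω = I 1 ω := by
      rw [Finset.Icc_self, Finset.sum_singleton]
    have e2 : (Finset.Icc 1 1).sup' hne (fun i => M i ω - ∑ j ∈ Finset.Icc i (1-1), I j ω)
        = M 1 ω := by
      rw [Finset.sup'_congr hne (Finset.Icc_self 1) (fun _ _ => rfl), Finset.sup'_singleton]
      simp
    rw [e1, e2, hdiv (I 1 ω), hdiv (M 1 ω)]
  | succ k hk ih =>
    intro x hne
    set c : ℝ := 1/(n:ℝ) with hcdef
    have hne' : (Finset.Icc 1 k).Nonempty := ⟨1, Finset.mem_Icc.mpr ⟨le_refl 1, hk⟩⟩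
    have hGmeas : Measurable (Gfun k f c x) := measurable_Gfun _ _ _ _ hfmeas
    have hPmeas : Measurable (Pfun I M k) := measurable_Pfun I M hImeas hMmeas k
    have htmeas : Measurable (tupFun I M k) := measurable_tupFun I M hImeas hMmeas k
    rw [Function.iterate_succ_apply', hTn]
    have hstep : (fun ω => Tn^[k] f (max (x - I 1 ω / ↑n) (M 1 ω / ↑n)))
        = fun ω => ∫ ω', Gfun k f c x (Pfun I M k (ω, ω')) ∂μ := by
      funext ω
      rw [ih _ hne']
      apply integral_congr_ae
      filter_upwards with ω'
      rw [Gfun_P I M hk f c x ω ω', hdiv (I 1 ω), hdiv (M 1 ω)]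
      exact congrArg f (max_shuffle c x (I 1 ω) (M 1 ω) _ _ hc)
    rw [hstep]
    have hint : Integrable (Function.uncurry fun ω ω' => Gfun k f c x (Pfun I M k (ω, ω')))
        (μ.prod μ) := by
      have hm : Measurable fun p : Ω × Ω => Gfun k f c x (Pfun I M k p) :=
        hGmeas.comp hPmeas
      refine ⟨hm.aestronglyMeasurable, ?_⟩
      apply HasFiniteIntegral.of_bounded (C := Cf)
      filter_upwards with p
      simpa [Real.norm_eq_abs, Gfun, Function.uncurry] using hCf _
    rw [MeasureTheory.integral_integral hint]
    have hswap : ∫ (z : Ω × Ω), Gfun k f c x (Pfun I M k z) ∂(μ.prod μ)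
        = ∫ ω, Gfun k f c x (tupFun I M k ω) ∂μ := by
      rw [← integral_map hPmeas.aemeasurable hGmeas.aestronglyMeasurable,
        law_P μ lamn hlamn I M hImeas hMmeas hindep hIexp hMid hk,
        ← law_tup μ lamn I M hImeas hMmeas hindep hIexp hMid k,
        integral_map htmeas.aemeasurable hGmeas.aestronglyMeasurable]
    refine Eq.trans hswap ?_
    apply integral_congr_ae
    filter_upwards with ω
    rw [Gfun_tup]
    simp only [Nat.add_sub_cancel]
end
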